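/- For every natural number k ≥ 0, the generating polynomials for Schur-coloured partitions satisfy G_{(k+2)_{ab}}(q;a,b) = (1 + aq)(1 + bq) · G_{k_b}(q;aq,bq), where G_{k_b}(q;aq,bq) denotes the polynomial obtained from G_{k_b}(q;a,b) ∈ ℤ[q,a,b] by substituting a ↦ aq and b ↦ bq. -/

import Mathlib

/-- The three colours of Alladi and Gordon's weighted-words Schur theorem. -/
inductive SchurColor : Type
  | ab | a | b
  deriving DecidableEq

open SchurColor

/-- The order on colours: ab < a < b, encoded by an index. -/
def schurColorIdx : SchurColor → ℕ
  | ab => 0 | a => 1 | b => 2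

/-- A Schur-coloured partition: a finite sequence of coloured positive integers with no
part 1_{ab}, where consecutive parts differ by at least 2 if the colour of the larger one
is ab or is strictly smaller than the colour of the next one, and by at least 1
otherwise. -/
def IsSchurColoured (l : List (ℕ × SchurColor)) : Prop :=
  (∀ p ∈ l, 0 < p.1 ∧ ¬(p.1 = 1 ∧ p.2 = ab)) ∧
    l.Chain' (fun p q =>
      q.1 + (if p.2 = ab ∨ schurColorIdx p.2 < schurColorIdx q.2 then 2 else 1) ≤ p.1)

/-- The rank of the coloured integer k_x in the total order
1_{ab} < 1_a < 1_b < 2_{ab} < 2_a < 2_b < ⋯. -/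
def schurRank (k : ℤ) (x : SchurColor) : ℤ := 3 * k + schurColorIdx x

/-- The generating polynomial G_{k_x}(q;a,b) for Schur-coloured partitions with largest
part at most k_x, as a (polynomial) multivariate power series in the variables
q (index 0), a (index 1), b (index 2): the coefficient of a^u b^v q^n is the number of
Schur-coloured partitions of n with statistics u, v and largest part at most k_x.
By convention it equals 0 for k < 0 (and it equals 1 for k = 0 since no coloured positive
integer is ≤ 0_x). -/
noncomputable def schurG (k : ℤ) (x : SchurColor) : MvPowerSeries (Fin 3) ℤ :=
  fun m => if k < 0 then 0 else
    (Nat.card {l : List (ℕ × SchurColor) // IsSchurColoured l ∧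
      (∀ p ∈ l, schurRank p.1 p.2 ≤ schurRank k x) ∧
      (l.map Prod.fst).sum = m 0 ∧
      l.countP (fun p => decide (p.2 = a ∨ p.2 = ab)) = m 1 ∧
      l.countP (fun p => decide (p.2 = b ∨ p.2 = ab)) = m 2} : ℤ)

/-- The substitution a ↦ aq, b ↦ bq on power series in q (index 0), a (index 1),
b (index 2): the coefficient of a^u b^v q^n of the image is the coefficient of
a^u b^v q^{n-u-v} of the original (and 0 when n < u + v). -/
noncomputable def substAQBQ (F : MvPowerSeries (Fin 3) ℤ) : MvPowerSeries (Fin 3) ℤ :=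
  fun m => if m 1 + m 2 ≤ m 0 then F (Finsupp.update m 0 (m 0 - m 1 - m 2)) else 0


instance : Fintype SchurColor :=
  ⟨⟨{SchurColor.ab, SchurColor.a, SchurColor.b}, by decide⟩, fun x => by cases x <;> decide⟩

/-- The defining predicate of the sets counted by `schurG`. -/
def schurPred (k : ℤ) (x : SchurColor) (m : Fin 3 →₀ ℕ) (l : List (ℕ × SchurColor)) : Prop :=
  IsSchurColoured l ∧
    (∀ p ∈ l, schurRank p.1 p.2 ≤ schurRank k x) ∧
    (l.map Prod.fst).sum = m 0 ∧
    l.countP (fun p => decide (p.2 = a ∨ p.2 = ab)) = m 1 ∧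
    l.countP (fun p => decide (p.2 = b ∨ p.2 = ab)) = m 2

lemma schurG_coeff (k : ℤ) (x : SchurColor) (m : Fin 3 →₀ ℕ) :
    schurG k x m = if k < 0 then 0 else (Nat.card {l // schurPred k x m l} : ℤ) := rfl

lemma length_le_sum (l : List ℕ) (h : ∀ x ∈ l, 1 ≤ x) : l.length ≤ l.sum := by
  induction l with
  | nil => simp
  | cons p t ih =>
    simp only [List.length_cons, List.sum_cons]
    have := h p (by simp)
    have := ih (fun x hx => h x (by simp [hx]))
    omega

instance finite_schurPred (k : ℤ) (x : SchurColor) (m : Fin 3 →₀ ℕ) :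
    Finite {l : List (ℕ × SchurColor) // schurPred k x m l} := by
  set n := m 0 with hn
  have hfin : {l : List (ℕ × SchurColor) | l.length ≤ n ∧ ∀ p ∈ l, p.1 ≤ n}.Finite := by
    have h1 : {l : List (Fin (n + 1) × SchurColor) | l.length ≤ n}.Finite :=
      List.finite_length_le _ n
    refine (h1.image (fun l => l.map (fun p => ((p.1 : ℕ), p.2)))).subset ?_
    rintro l ⟨hlen, hbd⟩
    refine ⟨l.map (fun p => (⟨p.1 % (n + 1), Nat.mod_lt _ (Nat.succ_pos n)⟩, p.2)), by
      simpa using hlen, ?_⟩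
    show List.map _ (List.map _ l) = l
    rw [List.map_map]
    conv_rhs => rw [show l = l.map id from (List.map_id l).symm]
    refine List.map_congr_left fun p hp => ?_
    have := hbd p hp
    simp only [Function.comp_apply, id_eq]
    have hmod : p.1 % (n + 1) = p.1 := Nat.mod_eq_of_lt (by omega)
    exact Prod.ext (by simp [hmod]) rfl
  have := hfin.to_subtype
  refine Finite.of_injective
    (fun l => (⟨l.1, ?_, ?_⟩ : {l : List (ℕ × SchurColor) | l.length ≤ n ∧ ∀ p ∈ l, p.1 ≤ n}))
    ?_
  · obtain ⟨l, hsc, _, hsum, _⟩ := l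
    have : ∀ x ∈ l.map Prod.fst, 1 ≤ x := by
      intro y hy
      obtain ⟨p, hp, rfl⟩ := List.mem_map.1 hy
      exact (hsc.1 p hp).1
    calc l.length = (l.map Prod.fst).length := by simp
    _ ≤ (l.map Prod.fst).sum := length_le_sum _ this
    _ = n := hsum
  · obtain ⟨l, hsc, _, hsum, _⟩ := l
    intro p hp
    have : p.1 ∈ l.map Prod.fst := List.mem_map.2 ⟨p, hp, rfl⟩
    have := List.single_le_sum (l := l.map Prod.fst) (fun x _ => Nat.zero_le x) _ this
    omega
  · intro l1 l2 h
    have := congrArg Subtype.val h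
    exact Subtype.ext this
@[simp] lemma idx_ab : schurColorIdx ab = 0 := rfl
@[simp] lemma idx_a : schurColorIdx a = 1 := rfl
@[simp] lemma idx_b : schurColorIdx b = 2 := rfl

lemma schurColorIdx_le (x : SchurColor) : schurColorIdx x ≤ 2 := by cases x <;> simp [schurColorIdx]

lemma schur_strict {l : List (ℕ × SchurColor)} (hl : IsSchurColoured l) :
    l.Pairwise (fun p q => q.1 < p.1) := by
  have : IsTrans (ℕ × SchurColor) (fun p q => q.1 < p.1) :=
    ⟨fun _ _ _ h1 h2 => lt_trans h2 h1⟩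
  refine List.isChain_iff_pairwise.1 (hl.2.imp ?_)
  intro p q h
  split_ifs at h <;> omega

lemma schurG_one_of (k : ℤ) (x : SchurColor) (hk : 0 ≤ k)
    (h : ∀ p : ℕ × SchurColor, 0 < p.1 → ¬(p.1 = 1 ∧ p.2 = ab) →
      ¬ schurRank p.1 p.2 ≤ schurRank k x) :
    schurG k x = 1 := by
  apply MvPowerSeries.ext
  intro m
  rw [MvPowerSeries.coeff_apply, schurG_coeff, if_neg (by omega), MvPowerSeries.coeff_one]
  have hnil : ∀ l : List (ℕ × SchurColor), (∀ p ∈ l, schurRank p.1 p.2 ≤ schurRank k x) →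
      IsSchurColoured l → l = [] := by
    intro l hrk hsc
    match l with
    | [] => rfl
    | p :: t =>
      have h1 := hsc.1 p (by simp)
      exact absurd (hrk p (by simp)) (h p h1.1 h1.2)
  by_cases hm : m = 0
  · subst hm
    rw [if_pos rfl]
    have huniq : ∀ l, schurPred k x 0 l ↔ l = [] := by
      intro l
      constructor
      · rintro ⟨h1, h2, _⟩
        exact hnil l h2 h1
      · rintro rfl
        exact ⟨⟨by simp, List.isChain_nil⟩, by simp, by simp, by simp, by simp⟩
    rw [Nat.card_congr (Equiv.subtypeEquivRight huniq)]
    haveI : Unique {l : List (ℕ × SchurColor) // l = []} :=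
      ⟨⟨⟨[], rfl⟩⟩, by rintro ⟨l, rfl⟩; rfl⟩
    simp [Nat.card_unique]
  · rw [if_neg hm]
    haveI : IsEmpty {l // schurPred k x m l} := by
      constructor
      rintro ⟨l, hl⟩
      have hl' : l = [] := hnil l hl.2.1 hl.1
      subst hl'
      obtain ⟨_, _, h0, h1, h2⟩ := hl
      apply hm
      simp only [List.map_nil, List.sum_nil, List.countP_nil] at h0 h1 h2
      ext i
      fin_cases i
      · simpa using h0.symm
      · simpa using h1.symm
      · simpa using h2.symm
    simp [Nat.card_of_isEmpty]

lemma schurG_zero_colour (x : SchurColor) : schurG 0 x = 1 := by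
  apply schurG_one_of _ _ le_rfl
  intro p hp _
  have h1 := schurColorIdx_le p.2
  have h2 := schurColorIdx_le x
  simp only [schurRank, not_le]
  omega

lemma schurG_one_ab : schurG 1 ab = 1 := by
  apply schurG_one_of _ _ (by norm_num)
  rintro ⟨n, c⟩ hp hq
  simp only [not_le, schurRank]
  cases c
  · have hn : ¬(n = 1) := fun h => hq ⟨h, rfl⟩
    simp only [idx_ab]
    simp only at hp
    omega
  · simp only [idx_ab, idx_a]
    simp only at hp
    omega
  · simp only [idx_ab, idx_b]
    simp only at hp
    omega
lemma card_step (k : ℕ) (x : SchurColor) (k' k'' : ℤ) (x' x'' : SchurColor)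
    (hk : 1 ≤ k) (hx : ¬(k = 1 ∧ x = ab))
    (hpred : ∀ q : ℕ × SchurColor, 0 < q.1 →
      (schurRank q.1 q.2 ≤ schurRank k' x' ↔
        schurRank q.1 q.2 ≤ schurRank (k : ℤ) x ∧ ¬(q.1 = k ∧ q.2 = x)))
    (hbd : ∀ q : ℕ × SchurColor, 0 < q.1 →
      (schurRank q.1 q.2 ≤ schurRank k'' x'' ↔
        q.1 + (if x = ab ∨ schurColorIdx x < schurColorIdx q.2 then 2 else 1) ≤ k))
    (hbd' : schurRank k'' x'' ≤ schurRank (k : ℤ) x)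
    (e : Fin 3 →₀ ℕ)
    (he0 : e 0 = k)
    (he1 : e 1 = if x = a ∨ x = ab then 1 else 0)
    (he2 : e 2 = if x = b ∨ x = ab then 1 else 0)
    (m : Fin 3 →₀ ℕ) :
    Nat.card {l // schurPred (k : ℤ) x m l} =
      Nat.card {l // schurPred k' x' m l} +
        if e ≤ m then Nat.card {l // schurPred k'' x'' (m - e) l} else 0 := by
  classical
  -- if the part (k, x) occurs, then e ≤ m
  have key1 : ∀ l, schurPred (k : ℤ) x m l → (k, x) ∈ l → e ≤ m := by
    intro l hl hmem
    rw [Finsupp.le_def]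
    intro i
    fin_cases i
    · show e 0 ≤ m 0
      rw [he0, ← hl.2.2.1]
      exact List.single_le_sum (fun y _ => Nat.zero_le y) _
        (List.mem_map.2 ⟨(k, x), hmem, rfl⟩)
    · show e 1 ≤ m 1
      rw [he1, ← hl.2.2.2.1]
      split_ifs with hcol
      · exact List.countP_pos_iff.2 ⟨(k, x), hmem, by simpa using hcol⟩
      · exact Nat.zero_le _
    · show e 2 ≤ m 2
      rw [he2, ← hl.2.2.2.2]
      split_ifs with hcol
      · exact List.countP_pos_iff.2 ⟨(k, x), hmem, by simpa using hcol⟩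
      · exact Nat.zero_le _
  -- if not all parts are below the predecessor, the list starts with (k, x)
  have hdec : ∀ l, schurPred (k : ℤ) x m l →
      ¬(∀ p ∈ l, schurRank p.1 p.2 ≤ schurRank k' x') → ∃ t, l = (k, x) :: t := by
    intro l hl hne
    push_neg at hne
    obtain ⟨p, hpl, hpr⟩ := hne
    have hp0 : 0 < p.1 := (hl.1.1 p hpl).1
    have hpk : p = (k, x) := by
      have h1 := hl.2.1 p hpl
      obtain ⟨h2, h3⟩ : p.1 = k ∧ p.2 = x := by
        by_contra hc
        exact absurd ((hpred p hp0).2 ⟨h1, hc⟩) (not_le.2 hpr)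
      exact Prod.ext h2 h3
    subst hpk
    cases l with
    | nil => simp at hpl
    | cons h₀ t =>
      refine ⟨t, ?_⟩
      rcases List.mem_cons.1 hpl with h | h
      · rw [← h]
      · exfalso
        have hpair := schur_strict hl.1
        have hlt : (k : ℕ) < h₀.1 := (List.pairwise_cons.1 hpair).1 _ h
        have hbig := hl.2.1 h₀ (by simp)
        have hi1 := schurColorIdx_le h₀.2
        have hi2 := schurColorIdx_le x
        simp only [schurRank] at hbig
        omega
  -- the tail of a list starting with (k, x) is counted on the other side
  have htail : ∀ t, schurPred (k : ℤ) x m ((k, x) :: t) → schurPred k'' x'' (m - e) t := by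
    intro t hl
    obtain ⟨⟨hparts, hchain⟩, hrk, hsum, hc1, hc2⟩ := hl
    have hparts' : ∀ p ∈ t, 0 < p.1 ∧ ¬(p.1 = 1 ∧ p.2 = ab) :=
      fun p hp => hparts p (List.mem_cons_of_mem _ hp)
    refine ⟨⟨hparts', hchain.tail⟩, ?_, ?_, ?_, ?_⟩
    · intro q hq
      rw [hbd q (hparts' q hq).1]
      cases t with
      | nil => simp at hq
      | cons q₀ t' =>
        have hlink : q₀.1 + (if x = ab ∨ schurColorIdx x < schurColorIdx q₀.2
            then 2 else 1) ≤ k := (List.isChain_cons_cons.1 hchain).1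
        have hite1 : 1 ≤ (if x = ab ∨ schurColorIdx x < schurColorIdx q₀.2
            then 2 else 1) := by split_ifs <;> omega
        rcases List.mem_cons.1 hq with rfl | hq'
        · exact hlink
        · have hpair := schur_strict ⟨hparts', hchain.tail⟩
          have hlt : q.1 < q₀.1 := (List.pairwise_cons.1 hpair).1 _ hq'
          have hite2 : (if x = ab ∨ schurColorIdx x < schurColorIdx q.2
              then 2 else 1) ≤ 2 := by split_ifs <;> omega
          omega
    · simp only [List.map_cons, List.sum_cons] at hsum
      rw [Finsupp.tsub_apply, he0]
      omega
    · simp only [List.countP_cons] at hc1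
      have he1' : (if (decide (x = a ∨ x = ab)) = true then 1 else 0) = e 1 := by
        rw [he1]
        by_cases h : (x = a ∨ x = ab) <;> simp [h]
      rw [Finsupp.tsub_apply]
      omega
    · simp only [List.countP_cons] at hc2
      have he2' : (if (decide (x = b ∨ x = ab)) = true then 1 else 0) = e 2 := by
        rw [he2]
        by_cases h : (x = b ∨ x = ab) <;> simp [h]
      rw [Finsupp.tsub_apply]
      omega
  -- conversely, consing (k, x) onto a counted list gives a counted list
  have hcons : ∀ t, schurPred k'' x'' (m - e) t → e ≤ m → schurPred (k : ℤ) x m ((k, x) :: t) := by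
    intro t ht hem
    obtain ⟨⟨hparts, hchain⟩, hrk, hsum, hc1, hc2⟩ := ht
    have hem' := Finsupp.le_def.1 hem
    refine ⟨⟨?_, ?_⟩, ?_, ?_, ?_, ?_⟩
    · refine List.forall_mem_cons.2 ⟨⟨by exact hk, ?_⟩, hparts⟩
      simpa using hx
    · refine List.isChain_cons.2 ⟨?_, hchain⟩
      intro q₀ hq₀
      have hmem := List.mem_of_mem_head? hq₀
      exact (hbd q₀ (hparts _ hmem).1).1 (hrk _ hmem)
    · refine List.forall_mem_cons.2 ⟨le_refl _, fun q hq => le_trans (hrk q hq) hbd'⟩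
    · simp only [List.map_cons, List.sum_cons]
      rw [Finsupp.tsub_apply, he0] at hsum
      have := hem' 0
      rw [he0] at this
      omega
    · simp only [List.countP_cons]
      rw [Finsupp.tsub_apply] at hc1
      have := hem' 1
      have he1' : (if (decide (x = a ∨ x = ab)) = true then 1 else 0) = e 1 := by
        rw [he1]
        by_cases h : (x = a ∨ x = ab) <;> simp [h]
      omega
    · simp only [List.countP_cons]
      rw [Finsupp.tsub_apply] at hc2
      have := hem' 2
      have he2' : (if (decide (x = b ∨ x = ab)) = true then 1 else 0) = e 2 := by
        rw [he2]
        by_cases h : (x = b ∨ x = ab) <;> simp [h]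
      omega
  by_cases hem : e ≤ m
  · rw [if_pos hem]
    have eqv : {l // schurPred (k : ℤ) x m l} ≃
        {l // schurPred k' x' m l} ⊕ {l // schurPred k'' x'' (m - e) l} := by
      refine ⟨fun lp => if h : ∀ p ∈ lp.1, schurRank p.1 p.2 ≤ schurRank k' x'
          then .inl ⟨lp.1, lp.2.1, h, lp.2.2.2⟩
          else .inr ⟨lp.1.tail, ?_⟩,
        fun s => Sum.rec
          (fun lp => ⟨lp.1, lp.2.1, fun p hp =>
            ((hpred p (lp.2.1.1 p hp).1).1 (lp.2.2.1 p hp)).1, lp.2.2.2⟩)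
          (fun tp => ⟨(k, x) :: tp.1, hcons tp.1 tp.2 hem⟩) s,
        ?_, ?_⟩
      · obtain ⟨t, htt⟩ := hdec lp.1 lp.2 h
        rw [htt]
        exact htail t (htt ▸ lp.2)
      · intro lp
        dsimp only
        split_ifs with h
        · rfl
        · obtain ⟨t, htt⟩ := hdec lp.1 lp.2 h
          refine Subtype.ext ?_
          show (k, x) :: lp.1.tail = lp.1
          rw [htt]
          simp only [List.tail_cons]
      · intro s
        cases s with
        | inl lp =>
          dsimp only
          rw [dif_pos lp.2.2.1]
        | inr tp =>
          dsimp only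
          have hcond : ¬ ∀ p ∈ (k, x) :: tp.1, schurRank (p.1 : ℤ) p.2 ≤ schurRank k' x' := by
            intro hall
            have h1 := hall (k, x) List.mem_cons_self
            have h2 := (hpred (k, x) (by exact hk)).1 h1
            exact h2.2 ⟨rfl, rfl⟩
          rw [dif_neg hcond]
          exact congrArg Sum.inr (Subtype.ext rfl)
    rw [Nat.card_congr eqv, Nat.card_sum]
  · rw [if_neg hem, add_zero]
    refine Nat.card_congr (Equiv.subtypeEquivRight fun l => ⟨?_, ?_⟩)
    · intro hl
      refine ⟨hl.1, fun p hp => ?_, hl.2.2⟩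
      refine (hpred p (hl.1.1 p hp).1).2 ⟨hl.2.1 p hp, ?_⟩
      rintro ⟨h1, h2⟩
      refine hem (key1 l hl ?_)
      have : p = (k, x) := Prod.ext h1 h2
      exact this ▸ hp
    · intro hl
      exact ⟨hl.1, fun p hp => ((hpred p (hl.1.1 p hp).1).1 (hl.2.1 p hp)).1, hl.2.2⟩
open MvPowerSeries Finsupp in
lemma X2X0_eq (j : ℕ) : (X 2 * X 0 ^ j : MvPowerSeries (Fin 3) ℤ) =
    monomial (single 0 j + single 2 1) 1 := by
  rw [X_pow_eq, X, monomial_mul_monomial, one_mul, add_comm]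

open MvPowerSeries Finsupp in
lemma X1X0_eq (j : ℕ) : (X 1 * X 0 ^ j : MvPowerSeries (Fin 3) ℤ) =
    monomial (single 0 j + single 1 1) 1 := by
  rw [X_pow_eq, X, monomial_mul_monomial, one_mul, add_comm]

open MvPowerSeries Finsupp in
lemma X1X2X0_eq (j : ℕ) : (X 1 * X 2 * X 0 ^ j : MvPowerSeries (Fin 3) ℤ) =
    monomial (single 0 j + single 1 1 + single 2 1) 1 := by
  rw [X_pow_eq, X, X, monomial_mul_monomial, monomial_mul_monomial, one_mul, one_mul]
  congr 1
  abel

open MvPowerSeries Finsupp in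
lemma recC' (k : ℕ) : schurG ((k : ℤ) + 1) b = schurG ((k : ℤ) + 1) a +
    (X 2 * X 0 ^ (k + 1) : MvPowerSeries (Fin 3) ℤ) * schurG (k : ℤ) b := by
  apply MvPowerSeries.ext
  intro m
  rw [X2X0_eq, map_add, MvPowerSeries.coeff_monomial_mul]
  simp only [MvPowerSeries.coeff_apply, schurG_coeff, one_mul]
  have h1 : ¬((k : ℤ) + 1 < 0) := by omega
  have h2 : ¬((k : ℤ) < 0) := by omega
  rw [if_neg h1, if_neg h1, if_neg h2]
  have hcs := card_step (k + 1) b ((k : ℤ) + 1) (k : ℤ) a b (by omega) (by simp)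
    (by rintro ⟨n, c⟩ hn; cases c <;> simp [schurRank] <;> omega)
    (by rintro ⟨n, c⟩ hn; cases c <;> simp [schurRank] <;> omega)
    (by simp only [schurRank, idx_ab, idx_a, idx_b]; omega)
    (single 0 (k + 1) + single 2 1)
    (by simp) (by simp) (by simp) m
  push_cast at hcs
  rw [hcs]
  split_ifs <;> push_cast <;> ring

open MvPowerSeries Finsupp in
lemma recB' (k : ℕ) : schurG ((k : ℤ) + 1) a = schurG ((k : ℤ) + 1) ab +
    (X 1 * X 0 ^ (k + 1) : MvPowerSeries (Fin 3) ℤ) * schurG (k : ℤ) a := by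
  apply MvPowerSeries.ext
  intro m
  rw [X1X0_eq, map_add, MvPowerSeries.coeff_monomial_mul]
  simp only [MvPowerSeries.coeff_apply, schurG_coeff, one_mul]
  have h1 : ¬((k : ℤ) + 1 < 0) := by omega
  have h2 : ¬((k : ℤ) < 0) := by omega
  rw [if_neg h1, if_neg h1, if_neg h2]
  have hcs := card_step (k + 1) a ((k : ℤ) + 1) (k : ℤ) ab a (by omega) (by simp)
    (by rintro ⟨n, c⟩ hn; cases c <;> simp [schurRank] <;> omega)
    (by rintro ⟨n, c⟩ hn; cases c <;> simp [schurRank] <;> omega)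
    (by simp only [schurRank, idx_ab, idx_a, idx_b]; omega)
    (single 0 (k + 1) + single 1 1)
    (by simp) (by simp) (by simp) m
  push_cast at hcs
  rw [hcs]
  split_ifs <;> push_cast <;> ring

open MvPowerSeries Finsupp in
lemma recA' (k : ℕ) : schurG ((k : ℤ) + 2) ab = schurG ((k : ℤ) + 1) b +
    (X 1 * X 2 * X 0 ^ (k + 2) : MvPowerSeries (Fin 3) ℤ) * schurG (k : ℤ) b := by
  apply MvPowerSeries.ext
  intro m
  rw [X1X2X0_eq, map_add, MvPowerSeries.coeff_monomial_mul]
  simp only [MvPowerSeries.coeff_apply, schurG_coeff, one_mul]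
  have h1 : ¬((k : ℤ) + 2 < 0) := by omega
  have h1' : ¬((k : ℤ) + 1 < 0) := by omega
  have h2 : ¬((k : ℤ) < 0) := by omega
  rw [if_neg h1, if_neg h1', if_neg h2]
  have hcs := card_step (k + 2) ab ((k : ℤ) + 1) (k : ℤ) b b (by omega) (by omega)
    (by rintro ⟨n, c⟩ hn; cases c <;> simp [schurRank] <;> omega)
    (by rintro ⟨n, c⟩ hn; cases c <;> simp [schurRank] <;> omega)
    (by simp only [schurRank, idx_ab, idx_a, idx_b]; omega)
    (single 0 (k + 2) + single 1 1 + single 2 1)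
    (by simp) (by simp) (by simp) m
  push_cast at hcs
  rw [hcs]
  split_ifs <;> push_cast <;> ring
lemma fin3_ext {m n : Fin 3 →₀ ℕ} (h0 : m 0 = n 0) (h1 : m 1 = n 1) (h2 : m 2 = n 2) :
    m = n := by
  ext i
  fin_cases i
  · exact h0
  · exact h1
  · exact h2

lemma fin3_le {m n : Fin 3 →₀ ℕ} : m ≤ n ↔ m 0 ≤ n 0 ∧ m 1 ≤ n 1 ∧ m 2 ≤ n 2 := by
  rw [Finsupp.le_def]
  constructor
  · intro h
    exact ⟨h 0, h 1, h 2⟩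
  · rintro ⟨h0, h1, h2⟩ i
    fin_cases i
    · exact h0
    · exact h1
    · exact h2

lemma upd_apply (m : Fin 3 →₀ ℕ) (v : ℕ) (i : Fin 3) :
    (Finsupp.update m 0 v) i = if i = 0 then v else m i := by
  classical
  rw [Finsupp.coe_update, Function.update_apply]


lemma upd_apply0 (m : Fin 3 →₀ ℕ) (v : ℕ) : (Finsupp.update m 0 v) 0 = v := by
  rw [upd_apply, if_pos rfl]

lemma upd_apply1 (m : Fin 3 →₀ ℕ) (v : ℕ) : (Finsupp.update m 0 v) 1 = m 1 := by
  rw [upd_apply, if_neg (by decide)]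

lemma upd_apply2 (m : Fin 3 →₀ ℕ) (v : ℕ) : (Finsupp.update m 0 v) 2 = m 2 := by
  rw [upd_apply, if_neg (by decide)]

open Finsupp in
lemma sing_apply0 (j u v : ℕ) :
    (single 0 j + single 1 u + single 2 v : Fin 3 →₀ ℕ) 0 = j := by
  simp [Finsupp.single_apply]

open Finsupp in
lemma sing_apply1 (j u v : ℕ) :
    (single 0 j + single 1 u + single 2 v : Fin 3 →₀ ℕ) 1 = u := by
  simp [Finsupp.single_apply]

open Finsupp in
lemma sing_apply2 (j u v : ℕ) :
    (single 0 j + single 1 u + single 2 v : Fin 3 →₀ ℕ) 2 = v := by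
  simp [Finsupp.single_apply]

lemma substAQBQ_add (F G : MvPowerSeries (Fin 3) ℤ) :
    substAQBQ (F + G) = substAQBQ F + substAQBQ G := by
  apply MvPowerSeries.ext
  intro m
  rw [map_add]
  simp only [MvPowerSeries.coeff_apply, substAQBQ]
  split_ifs with h
  · exact map_add (MvPowerSeries.coeff _) F G
  · simp

lemma substAQBQ_sub (F G : MvPowerSeries (Fin 3) ℤ) :
    substAQBQ (F - G) = substAQBQ F - substAQBQ G := by
  apply MvPowerSeries.ext
  intro m
  rw [map_sub]
  simp only [MvPowerSeries.coeff_apply, substAQBQ]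
  split_ifs with h
  · exact map_sub (MvPowerSeries.coeff _) F G
  · simp

lemma substAQBQ_one : substAQBQ 1 = 1 := by
  classical
  apply MvPowerSeries.ext
  intro m
  have hone : ∀ z : Fin 3 →₀ ℕ, (1 : MvPowerSeries (Fin 3) ℤ) z = if z = 0 then 1 else 0 :=
    fun z => MvPowerSeries.coeff_one z
  simp only [MvPowerSeries.coeff_apply, substAQBQ, hone]
  by_cases hm : m = 0
  · subst hm
    rw [if_pos (by simp), if_pos, if_pos rfl]
    apply fin3_ext
    · rw [upd_apply0]; simp
    · rw [upd_apply1]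
    · rw [upd_apply2]
  · rw [if_neg hm]
    split_ifs with h1 h2
    · exfalso
      apply hm
      rw [Finsupp.ext_iff] at h2
      have h0 := h2 0
      have h1' := h2 1
      have h2' := h2 2
      rw [upd_apply0] at h0
      rw [upd_apply1] at h1'
      rw [upd_apply2] at h2'
      simp only [Finsupp.coe_zero, Pi.zero_apply] at h0 h1' h2'
      apply fin3_ext <;> simp only [Finsupp.coe_zero, Pi.zero_apply] <;> omega
    · rfl
    · rfl

open MvPowerSeries Finsupp in
lemma substAQBQ_shift (j u v : ℕ) (F : MvPowerSeries (Fin 3) ℤ) :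
    substAQBQ (monomial (single 0 j + single 1 u + single 2 v) 1 * F) =
      monomial (single 0 (j + u + v) + single 1 u + single 2 v) 1 * substAQBQ F := by
  classical
  apply MvPowerSeries.ext
  intro m
  have hco : ∀ (e : Fin 3 →₀ ℕ) (z : Fin 3 →₀ ℕ),
      (monomial e (1 : ℤ) * F) z = if e ≤ z then F (z - e) else 0 := by
    intro e z
    have := MvPowerSeries.coeff_monomial_mul (m := z) (n := e) (φ := F) (1 : ℤ)
    simpa [MvPowerSeries.coeff_apply] using this
  have H2 : ((single 0 j + single 1 u + single 2 v : Fin 3 →₀ ℕ) ≤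
      Finsupp.update m 0 (m 0 - m 1 - m 2)) ↔
      (j ≤ m 0 - m 1 - m 2 ∧ u ≤ m 1 ∧ v ≤ m 2) := by
    rw [fin3_le, sing_apply0, sing_apply1, sing_apply2, upd_apply0, upd_apply1, upd_apply2]
  have H3 : ((single 0 (j + u + v) + single 1 u + single 2 v : Fin 3 →₀ ℕ) ≤ m) ↔
      (j + u + v ≤ m 0 ∧ u ≤ m 1 ∧ v ≤ m 2) := by
    rw [fin3_le, sing_apply0, sing_apply1, sing_apply2]
  have H40 : (m - (single 0 (j + u + v) + single 1 u + single 2 v) : Fin 3 →₀ ℕ) 0 =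
      m 0 - (j + u + v) := by rw [Finsupp.tsub_apply, sing_apply0]
  have H41 : (m - (single 0 (j + u + v) + single 1 u + single 2 v) : Fin 3 →₀ ℕ) 1 =
      m 1 - u := by rw [Finsupp.tsub_apply, sing_apply1]
  have H42 : (m - (single 0 (j + u + v) + single 1 u + single 2 v) : Fin 3 →₀ ℕ) 2 =
      m 2 - v := by rw [Finsupp.tsub_apply, sing_apply2]
  have L0 : (Finsupp.update m 0 (m 0 - m 1 - m 2) -
      (single 0 j + single 1 u + single 2 v) : Fin 3 →₀ ℕ) 0 = m 0 - m 1 - m 2 - j := by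
    rw [Finsupp.tsub_apply, sing_apply0, upd_apply0]
  have L1 : (Finsupp.update m 0 (m 0 - m 1 - m 2) -
      (single 0 j + single 1 u + single 2 v) : Fin 3 →₀ ℕ) 1 = m 1 - u := by
    rw [Finsupp.tsub_apply, sing_apply1, upd_apply1]
  have L2 : (Finsupp.update m 0 (m 0 - m 1 - m 2) -
      (single 0 j + single 1 u + single 2 v) : Fin 3 →₀ ℕ) 2 = m 2 - v := by
    rw [Finsupp.tsub_apply, sing_apply2, upd_apply2]
  rw [MvPowerSeries.coeff_apply, MvPowerSeries.coeff_monomial_mul, one_mul]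
  simp only [MvPowerSeries.coeff_apply, substAQBQ, hco, H2, H3, H40, H41, H42]
  split_ifs with h1 h2 h3 h4 h5 <;>
    first
      | rfl
      | (exfalso; omega)
      | (apply congrArg F
         apply fin3_ext
         · rw [L0, upd_apply0]; omega
         · rw [L1, upd_apply1, H41]
         · rw [L2, upd_apply2, H42])
open MvPowerSeries Finsupp in
lemma substAQBQ_shiftA (j : ℕ) (F : MvPowerSeries (Fin 3) ℤ) :
    substAQBQ (X 1 * X 0 ^ j * F) = X 1 * X 0 ^ (j + 1) * substAQBQ F := by
  have h := substAQBQ_shift j 1 0 F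
  simp only [Finsupp.single_zero, add_zero, Nat.add_zero] at h
  rw [X1X0_eq j, X1X0_eq (j + 1)]
  exact h

open MvPowerSeries Finsupp in
lemma substAQBQ_shiftB (j : ℕ) (F : MvPowerSeries (Fin 3) ℤ) :
    substAQBQ (X 2 * X 0 ^ j * F) = X 2 * X 0 ^ (j + 1) * substAQBQ F := by
  have h := substAQBQ_shift j 0 1 F
  simp only [Finsupp.single_zero, add_zero, Nat.add_zero, zero_add] at h
  rw [X2X0_eq j, X2X0_eq (j + 1)]
  exact h

open MvPowerSeries Finsupp in
lemma substAQBQ_shiftAB (j : ℕ) (F : MvPowerSeries (Fin 3) ℤ) :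
    substAQBQ (X 1 * X 2 * X 0 ^ j * F) = X 1 * X 2 * X 0 ^ (j + 2) * substAQBQ F := by
  have h := substAQBQ_shift j 1 1 F
  rw [show j + 1 + 1 = j + 2 by omega] at h
  rw [X1X2X0_eq j, X1X2X0_eq (j + 2)]
  exact h

open MvPowerSeries in
lemma hCK (j : ℕ) : schurG ((j : ℤ) + 2) b =
    schurG ((j : ℤ) + 1) b + X 1 * X 0 ^ (j + 2) * schurG ((j : ℤ) + 1) b +
      X 2 * X 0 ^ (j + 2) * schurG ((j : ℤ) + 1) b +
      X 1 * X 2 * X 0 ^ (j + 2) * schurG (j : ℤ) b -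
      X 1 * X 2 * X 0 ^ (2 * j + 3) * schurG (j : ℤ) b := by
  have r1 := recC' (j + 1)
  have r2 := recB' (j + 1)
  have r3 := recA' j
  have r4 := recC' j
  push_cast at r1 r2 r3 r4
  rw [show ((j : ℤ) + 1) + 1 = (j : ℤ) + 2 by ring] at r1 r2
  rw [r1, r2, r3]
  rw [show schurG ((j : ℤ) + 1) a =
      schurG ((j : ℤ) + 1) b - X 2 * X 0 ^ (j + 1) * schurG (j : ℤ) b by rw [r4]; ring]
  ring

open MvPowerSeries in
/-- G_{(k+2)_{ab}}(q;a,b) = (1 + aq)(1 + bq) G_{k_b}(q;aq,bq) for all k ≥ 0. -/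
theorem schurG_key (k : ℕ) :
    schurG ((k : ℤ) + 2) SchurColor.ab =
      (1 + X 1 * X 0) * (1 + X 2 * (X 0 : MvPowerSeries (Fin 3) ℤ)) *
        substAQBQ (schurG k SchurColor.b) := by
  induction k using Nat.strong_induction_on with
  | _ k IH =>
  match k with
  | 0 =>
    have r1 := recA' 0
    have r2 := recC' 0
    have r3 := recB' 0
    norm_num at r1 r2 r3 ⊢
    rw [r1, r2, r3]
    simp only [schurG_zero_colour, schurG_one_ab, substAQBQ_one]
    ring
  | 1 =>
    have r1 := recA' 1
    have r2 := recC' 1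
    have r3 := recB' 1
    have r4 := recA' 0
    have r5 := recC' 0
    have r6 := recB' 0
    norm_num at r1 r2 r3 r4 r5 r6 ⊢
    have hC1 : schurG (1 : ℤ) b =
        1 + X 1 * X 0 ^ 1 * (1 : MvPowerSeries (Fin 3) ℤ) + X 2 * X 0 ^ 1 * 1 := by
      rw [r5, r6]
      simp only [schurG_zero_colour, schurG_one_ab]
      ring
    rw [hC1, substAQBQ_add, substAQBQ_add, substAQBQ_one, substAQBQ_shiftA,
      substAQBQ_shiftB, substAQBQ_one]
    rw [r1, r2, r3, r4, r5, r6]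
    simp only [schurG_zero_colour, schurG_one_ab]
    ring
  | (n + 2) =>
    have IH1 := IH (n + 1) (by omega)
    have IH0 := IH n (by omega)
    push_cast at IH1 IH0 ⊢
    rw [show ((n : ℤ) + 1) + 2 = (n : ℤ) + 3 by ring] at IH1
    -- substituted recurrence for substAQBQ (schurG (n+2) b)
    have hT := congrArg substAQBQ (hCK n)
    rw [substAQBQ_sub, substAQBQ_add, substAQBQ_add, substAQBQ_add,
      substAQBQ_shiftA, substAQBQ_shiftB, substAQBQ_shiftAB, substAQBQ_shiftAB] at hT
    have hR : (1 + X 1 * X 0) * (1 + X 2 * (X 0 : MvPowerSeries (Fin 3) ℤ)) *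
        substAQBQ (schurG ((n : ℤ) + 2) b) =
        (1 + X 1 * X 0 ^ (n + 3) + X 2 * X 0 ^ (n + 3)) * schurG ((n : ℤ) + 3) ab +
          (X 1 * X 2 * X 0 ^ (n + 4) - X 1 * X 2 * X 0 ^ (2 * n + 5)) *
            schurG ((n : ℤ) + 2) ab := by
      rw [hT, IH1, IH0]
      ring
    rw [show ((n : ℤ) + 2) + 2 = (n : ℤ) + 4 by ring]
    rw [hR]
    have E1 := recA' (n + 2)
    have E2 := recA' (n + 1)
    have E3 := recA' n
    have H1 := hCK (n + 1)
    have H0 := hCK n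
    push_cast at E1 E2 E3 H1 H0
    rw [show ((n : ℤ) + 2) + 2 = (n : ℤ) + 4 by ring,
      show ((n : ℤ) + 2) + 1 = (n : ℤ) + 3 by ring] at E1
    rw [show ((n : ℤ) + 1) + 2 = (n : ℤ) + 3 by ring,
      show ((n : ℤ) + 1) + 1 = (n : ℤ) + 2 by ring] at E2
    rw [show ((n : ℤ) + 1) + 2 = (n : ℤ) + 3 by ring,
      show ((n : ℤ) + 1) + 1 = (n : ℤ) + 2 by ring] at H1
    rw [E1, E2, E3, H1, H0]
    ring
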